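/- Fix a real number m > 1 and a natural number n ≥ 3. Define I = (√((m+n−2)/(m(n−1))), √((m−1)(n−2)/(m(n−1))), 0) and K = (√((n−1)/(m(m+n−2))), √((m−1)(n−1)/(m(m+n−2))), √((m−1)/(m+n−2))). Then both I and K lie on the unit sphere in ℝ³ (their coordinates' squares sum to 1) and both are equilibrium points of the Böhm system, i.e. the right-hand side of the system vanishes at I and at K. (These are the two critical points identified in the proof of Theorem 5.7 of the paper.) -/

import Mathlib

noncomputable section

/-- First component of the right-hand side of the Böhm system. -/
def boehmRHS₁ (m c X Y W : ℝ) : ℝ := X * (X ^ 2 - Y ^ 2 / (m - 1)) + c * Y ^ 2 - X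

/-- Second component of the right-hand side of the Böhm system. -/
def boehmRHS₂ (m c X Y W : ℝ) : ℝ :=
  Y * (X ^ 2 - Y ^ 2 / (m - 1)) - c * X * Y + Y / (m - 1)

/-- Third component of the right-hand side of the Böhm system. -/
def boehmRHS₃ (m X Y W : ℝ) : ℝ := W * (X ^ 2 - Y ^ 2 / (m - 1))

private lemma my_sqrt_eq {a b : ℝ} (hb : 0 ≤ b) (h : a = b ^ 2) : Real.sqrt a = b := by
  rw [h, Real.sqrt_sq hb]

/-- The two critical points identified in the proof of Theorem 5.7 of the paper:
both `I = (√((m+n−2)/(m(n−1))), √((m−1)(n−2)/(m(n−1))), 0)` and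
`K = (√((n−1)/(m(m+n−2))), √((m−1)(n−1)/(m(m+n−2))), √((m−1)/(m+n−2)))` lie on the
unit sphere in `ℝ³` and are equilibrium points of the Böhm system. -/
theorem boehm_critical_points (m : ℝ) (hm : 1 < m) (n : ℕ) (hn : 3 ≤ n)
    (c : ℝ) (hc : c = (1 / (m - 1)) * Real.sqrt (m * (m + n - 2) / (n - 1)))
    (xI yI wI xK yK wK : ℝ)
    (hxI : xI = Real.sqrt ((m + n - 2) / (m * (n - 1))))
    (hyI : yI = Real.sqrt ((m - 1) * (n - 2) / (m * (n - 1))))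
    (hwI : wI = 0)
    (hxK : xK = Real.sqrt ((n - 1) / (m * (m + n - 2))))
    (hyK : yK = Real.sqrt ((m - 1) * (n - 1) / (m * (m + n - 2))))
    (hwK : wK = Real.sqrt ((m - 1) / (m + n - 2))) :
    (xI ^ 2 + yI ^ 2 + wI ^ 2 = 1 ∧
      boehmRHS₁ m c xI yI wI = 0 ∧ boehmRHS₂ m c xI yI wI = 0 ∧
      boehmRHS₃ m xI yI wI = 0) ∧
    (xK ^ 2 + yK ^ 2 + wK ^ 2 = 1 ∧
      boehmRHS₁ m c xK yK wK = 0 ∧ boehmRHS₂ m c xK yK wK = 0 ∧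
      boehmRHS₃ m xK yK wK = 0) := by
  have hN3 : (3:ℝ) ≤ (n:ℝ) := by exact_mod_cast hn
  have hm0 : (0:ℝ) < m := lt_trans one_pos hm
  have hm1 : (0:ℝ) < m - 1 := by linarith
  have hP : (0:ℝ) < m + n - 2 := by linarith
  have hQ : (0:ℝ) < (n:ℝ) - 1 := by linarith
  have hN2 : (0:ℝ) < (n:ℝ) - 2 := by linarith
  have hxI0 : 0 ≤ xI := hxI ▸ Real.sqrt_nonneg _
  have hxK0 : 0 ≤ xK := hxK ▸ Real.sqrt_nonneg _
  -- square identities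
  have hxI2 : xI ^ 2 = (m + n - 2) / (m * (n - 1)) := by
    rw [hxI]; exact Real.sq_sqrt (div_nonneg hP.le (mul_pos hm0 hQ).le)
  have hyI2 : yI ^ 2 = (m - 1) * (n - 2) / (m * (n - 1)) := by
    rw [hyI]; exact Real.sq_sqrt (div_nonneg (mul_pos hm1 hN2).le (mul_pos hm0 hQ).le)
  have hxK2 : xK ^ 2 = (n - 1) / (m * (m + n - 2)) := by
    rw [hxK]; exact Real.sq_sqrt (div_nonneg hQ.le (mul_pos hm0 hP).le)
  have hyK2 : yK ^ 2 = (m - 1) * (n - 1) / (m * (m + n - 2)) := by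
    rw [hyK]; exact Real.sq_sqrt (div_nonneg (mul_pos hm1 hQ).le (mul_pos hm0 hP).le)
  have hwK2 : wK ^ 2 = (m - 1) / (m + n - 2) := by
    rw [hwK]; exact Real.sq_sqrt (div_nonneg hm1.le hP.le)
  -- c = m * xI / (m - 1)
  have hs : Real.sqrt (m * (m + n - 2) / (n - 1)) = m * xI := by
    refine my_sqrt_eq (by positivity) ?_
    rw [mul_pow, hxI2]
    field_simp
  have hc' : c = m * xI / (m - 1) := by rw [hc, hs]; ring
  -- (n-1) * xI = (m+n-2) * xK
  have hG7 : ((n:ℝ) - 1) * xI = (m + n - 2) * xK := by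
    have h1 : Real.sqrt ((m + n - 2) * ((n:ℝ) - 1) / m) = ((n:ℝ) - 1) * xI := by
      refine my_sqrt_eq (by positivity) ?_
      rw [mul_pow, hxI2]; field_simp
    have h2 : Real.sqrt ((m + n - 2) * ((n:ℝ) - 1) / m) = (m + n - 2) * xK := by
      refine my_sqrt_eq (by positivity) ?_
      rw [mul_pow, hxK2]; field_simp
    rw [← h1, h2]
  -- m * xI * xK = 1
  have hG8 : m * xI * xK = 1 := by
    have h1 : Real.sqrt 1 = m * xI * xK := by
      refine my_sqrt_eq (by positivity) ?_
      rw [mul_pow, mul_pow, hxI2, hxK2]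
      field_simp
    rw [← h1, Real.sqrt_one]
  -- key scalar facts
  have eI : xI ^ 2 - yI ^ 2 / (m - 1) = 1 / ((n:ℝ) - 1) := by
    rw [hxI2, hyI2]; field_simp; ring
  have eK : xK ^ 2 - yK ^ 2 / (m - 1) = 0 := by
    rw [hxK2, hyK2]; field_simp; ring
  refine ⟨⟨?_, ?_, ?_, ?_⟩, ⟨?_, ?_, ?_, ?_⟩⟩
  · rw [hxI2, hyI2, hwI]; field_simp; ring
  · unfold boehmRHS₁
    have eI2 : c * yI ^ 2 = xI * (((n:ℝ) - 2) / ((n:ℝ) - 1)) := by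
      rw [hc', hyI2]; field_simp
    rw [eI, eI2]; field_simp; ring
  · unfold boehmRHS₂
    have eI3 : c * xI = (m + n - 2) / ((m - 1) * ((n:ℝ) - 1)) := by
      have h : c * xI = m * xI ^ 2 / (m - 1) := by rw [hc']; ring
      rw [h, hxI2]; field_simp
    rw [eI, eI3]; field_simp; ring
  · rw [hwI]; simp [boehmRHS₃]
  · rw [hxK2, hyK2, hwK2]; field_simp; ring
  · unfold boehmRHS₁
    have eK1 : c * yK ^ 2 = xK := by
      rw [hc', hyK2]
      field_simp
      linear_combination hG7
    rw [eK, eK1]; ring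
  · unfold boehmRHS₂
    have eK2 : c * xK = 1 / (m - 1) := by
      rw [hc']
      field_simp
      exact hG8
    rw [eK, eK2]; ring
  · unfold boehmRHS₃; rw [eK, mul_zero]
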